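/- For every e ∈ (0,1) and every natural number n, ∫₀^{2π} cos(n θ)/(1 + e cos θ) dθ = (2π/sqrt(1 - e²)) · ((sqrt(1 - e²) - 1)/e)^n. -/

import Mathlib

open Real intervalIntegral

lemma denomPos {e : ℝ} (he : 0 < e) (he1 : e < 1) (θ : ℝ) : 0 < 1 + e * Real.cos θ := by
  nlinarith [Real.neg_one_le_cos θ, Real.cos_le_one θ]

lemma contAux {e : ℝ} (he : 0 < e) (he1 : e < 1) (c : ℝ) :
    Continuous fun θ => Real.cos (c * θ) / (1 + e * Real.cos θ) := by
  apply Continuous.div (by continuity) (by continuity)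
  intro θ; exact ne_of_gt (denomPos he he1 θ)

lemma contAux0 {e : ℝ} (he : 0 < e) (he1 : e < 1) :
    Continuous fun θ : ℝ => 1 / (1 + e * Real.cos θ) := by
  apply Continuous.div continuous_const (by continuity)
  intro θ; exact ne_of_gt (denomPos he he1 θ)

lemma I0 {e : ℝ} (he : 0 < e) (he1 : e < 1) :
    ∫ θ in (0:ℝ)..(2*π), 1 / (1 + e * Real.cos θ) = 2*π / Real.sqrt (1 - e^2) := by
  have h1e : (0:ℝ) < 1 - e^2 := by nlinarith
  set s := Real.sqrt (1 - e^2) with hs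
  have hs0 : 0 < s := Real.sqrt_pos.mpr h1e
  have hs2 : s^2 = 1 - e^2 := Real.sq_sqrt h1e.le
  set b := e / (1 + s) with hb
  have hb0 : 0 < b := div_pos he (by linarith)
  have hb1 : b < 1 := by
    rw [hb, div_lt_one (by linarith)]; nlinarith
  have hbe : b * (1 + s) = e := by rw [hb]; exact div_mul_cancel₀ e (ne_of_gt (by linarith))
  have hR : s^2 = 1 - (b*(1+s))^2 := by rw [hbe]; exact hs2
  have hsb : s*(1+b^2) = 1-b^2 := by
    have h2 : (s*(1+b^2) - (1-b^2)) * (1+s) = 0 := by linear_combination hR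
    have h3 := (mul_eq_zero.mp h2).resolve_right (by positivity)
    linarith
  clear_value s b
  have hd : ∀ θ : ℝ, 0 < 1 + b * Real.cos θ := denomPos hb0 hb1
  have key : ∀ θ ∈ Set.uIcc (0:ℝ) (2*π),
      HasDerivAt (fun θ => (θ - 2 * Real.arctan (b * Real.sin θ / (1 + b * Real.cos θ))) / s)
        (1 / (1 + e * Real.cos θ)) θ := by
    intro θ _
    have hdθ := (hd θ).ne'
    have hg : HasDerivAt (fun θ => b * Real.sin θ / (1 + b * Real.cos θ))
        ((b * Real.cos θ * (1 + b * Real.cos θ) - b * Real.sin θ * (b * (-Real.sin θ))) / (1 + b * Real.cos θ)^2) θ :=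
      ((Real.hasDerivAt_sin θ).const_mul b).div
        (((Real.hasDerivAt_cos θ).const_mul b).const_add 1) hdθ
    have h := ((hasDerivAt_id θ).sub (hg.arctan.const_mul 2)).div_const s
    refine h.congr_deriv ?_
    symm
    have hde := (denomPos he he1 θ).ne'
    have hct : Real.sin θ ^ 2 + Real.cos θ ^ 2 = 1 := Real.sin_sq_add_cos_sq θ
    have h2 : 1 + (b * Real.sin θ / (1 + b * Real.cos θ))^2
        = (1 + 2*b*Real.cos θ + b^2) / (1 + b * Real.cos θ)^2 := by
      field_simp; nlinarith [hct]
    have h3 : (0:ℝ) < 1 + 2*b*Real.cos θ + b^2 := by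
      nlinarith [Real.neg_one_le_cos θ, sq_nonneg (1 - b)]
    have e4 : 1/((1 + 2*b*Real.cos θ + b^2) / (1 + b * Real.cos θ)^2) *
        ((b * Real.cos θ * (1 + b * Real.cos θ) - b * Real.sin θ * (b * (-Real.sin θ))) / (1 + b * Real.cos θ)^2)
        = b * (Real.cos θ + b) / (1 + 2*b*Real.cos θ + b^2) := by
      rw [one_div_div]
      field_simp
      congr 1; linear_combination b * hct
    rw [h2, e4, ← hbe] at *
    have h3' : 1 + b * Real.cos θ * 2 + b^2 ≠ 0 := ne_of_gt (by linarith)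
    field_simp
    linear_combination (1 + b*Real.cos θ) * hsb
  rw [integral_eq_sub_of_hasDerivAt key
    ((contAux0 he he1).intervalIntegrable _ _)]
  simp [Real.sin_two_pi, Real.cos_two_pi, Real.arctan_zero]

lemma intCosZero (m : ℕ) (hm : 1 ≤ m) :
    ∫ θ in (0:ℝ)..(2*π), Real.cos (m * θ) = 0 := by
  have hm0 : (m:ℝ) ≠ 0 := Nat.cast_ne_zero.mpr (by omega)
  rw [integral_comp_mul_left (fun x => Real.cos x) hm0]
  simp only [mul_zero, integral_cos, Real.sin_zero, sub_zero, smul_eq_mul]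
  have h : (m:ℝ) * (2*π) = (2*m : ℕ) * π := by push_cast; ring
  rw [h, Real.sin_nat_mul_pi, mul_zero]

lemma I1 {e : ℝ} (he : 0 < e) (he1 : e < 1) :
    ∫ θ in (0:ℝ)..(2*π), Real.cos θ / (1 + e * Real.cos θ)
      = (2*π / Real.sqrt (1 - e^2)) * ((Real.sqrt (1 - e^2) - 1) / e) := by
  have h1e : (0:ℝ) < 1 - e^2 := by nlinarith
  have hs0 : 0 < Real.sqrt (1 - e^2) := Real.sqrt_pos.mpr h1e
  have heq : ∀ θ : ℝ, Real.cos θ / (1 + e * Real.cos θ)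
      = 1/e - (1/e) * (1 / (1 + e * Real.cos θ)) := by
    intro θ
    have := (denomPos he he1 θ).ne'
    have := he.ne'
    have : 1 + Real.cos θ * e ≠ 0 := by rw [mul_comm]; exact (denomPos he he1 θ).ne'
    field_simp
    ring
  rw [integral_congr (g := fun θ => 1/e - (1/e) * (1 / (1 + e * Real.cos θ)))
    (fun θ _ => heq θ)]
  rw [integral_sub (g := fun θ => (1/e) * (1 / (1 + e * Real.cos θ))) (intervalIntegrable_const)
    ((continuous_const.mul (contAux0 he he1)).intervalIntegrable _ _),
    integral_const_mul, I0 he he1]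
  simp only [integral_const, smul_eq_mul]
  field_simp
  ring

theorem stmt_2 (e : ℝ) (he : 0 < e) (he1 : e < 1) (n : ℕ) :
    ∫ θ in (0:ℝ)..(2 * Real.pi), Real.cos (n * θ) / (1 + e * Real.cos θ)
      = (2 * Real.pi / Real.sqrt (1 - e ^ 2)) * ((Real.sqrt (1 - e ^ 2) - 1) / e) ^ n := by
  have h1e : (0:ℝ) < 1 - e^2 := by nlinarith
  have hs0 : 0 < Real.sqrt (1 - e^2) := Real.sqrt_pos.mpr h1e
  have hs2 : Real.sqrt (1 - e^2)^2 = 1 - e^2 := Real.sq_sqrt h1e.le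
  set s := Real.sqrt (1 - e^2) with hs
  induction n using Nat.twoStepInduction with
  | zero =>
    simp only [Nat.cast_zero, zero_mul, Real.cos_zero, pow_zero, mul_one]
    exact I0 he he1
  | one =>
    simp only [Nat.cast_one, one_mul, pow_one]
    exact I1 he he1
  | more n ih1 ih2 =>
    have heq : ∀ θ ∈ Set.uIcc (0:ℝ) (2*π), Real.cos ((n+2:ℕ) * θ) / (1 + e * Real.cos θ)
        = (2/e) * Real.cos ((n+1:ℕ)*θ)
          - (2/e) * (Real.cos ((n+1:ℕ)*θ) / (1 + e * Real.cos θ))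
          - Real.cos ((n:ℕ)*θ) / (1 + e * Real.cos θ) := by
      intro θ _
      have hd := (denomPos he he1 θ).ne'
      have h1 : ((n:ℝ)+2)*θ = ((n:ℝ)+1)*θ + θ := by ring
      have h2 : (n:ℝ)*θ = ((n:ℝ)+1)*θ - θ := by ring
      have := he.ne'
      have : 1 + Real.cos θ * e ≠ 0 := by rw [mul_comm]; exact hd
      push_cast
      rw [h1, h2, Real.cos_add, Real.cos_sub]
      field_simp
      ring
    rw [integral_congr heq]
    have c1 : Continuous fun θ : ℝ => (2/e) * Real.cos ((n+1:ℕ)*θ) := by continuity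
    have c2 : Continuous fun θ : ℝ => (2/e) * (Real.cos ((n+1:ℕ)*θ) / (1 + e * Real.cos θ)) :=
      continuous_const.mul (contAux he he1 _)
    have c3 := contAux he he1 (n:ℝ)
    rw [integral_sub (f := fun θ => (2/e) * Real.cos ((n+1:ℕ)*θ) - (2/e) * (Real.cos ((n+1:ℕ)*θ) / (1 + e * Real.cos θ))) ((c1.sub c2).intervalIntegrable _ _) (c3.intervalIntegrable _ _),
      integral_sub (c1.intervalIntegrable _ _) (c2.intervalIntegrable _ _),
      integral_const_mul, integral_const_mul, intCosZero (n+1) (by omega), ih1, ih2]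
    have hr : ((s-1)/e)^2 = -(2/e)*((s-1)/e) - 1 := by
      field_simp
      linear_combination hs2
    linear_combination (-(2*π/s * ((s-1)/e)^n)) * hr
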